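/- Let ω > 0 and let z, a, b : [0, ∞) → ℝ be continuously differentiable functions satisfying dz/dt = − z (a + b), da/dt = 2 ω z a, and db/dt = − 2 ω z b for all t ≥ 0, with initial conditions z(0) > 0 and a(0) = b(0) > 0. Then z(t) > 0 and a(t) − b(t) ≥ 0 for all t ≥ 0, and the function t ↦ a(t) + b(t) is nondecreasing on [0, ∞). That is, this initialization exhibits progressive sharpening (nondecreasing NTK) at all times under gradient flow. -/

import Mathlib

open Set intervalIntegral

/-- If `f' = g f` on `[0,∞)` with `g` continuous there and `f 0 > 0`,
then `f` stays positive on `[0,∞)`. -/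
lemma pos_of_linear_ode (f g : ℝ → ℝ) (hg : ContinuousOn g (Set.Ici 0))
    (hf : ∀ t ∈ Set.Ici (0 : ℝ), HasDerivAt f (g t * f t) t) (h0 : 0 < f 0) :
    ∀ t ∈ Set.Ici (0 : ℝ), 0 < f t := by
  set g' : ℝ → ℝ := fun t => g (max t 0) with hg'def
  have hm : Continuous fun t : ℝ => max t 0 := continuous_id.max continuous_const
  have hg'cont : Continuous g' := hg.comp_continuous hm fun x => Set.mem_Ici.mpr (le_max_right _ _)
  set G : ℝ → ℝ := fun x => ∫ s in (0:ℝ)..x, g' s with hGdef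
  have hG : ∀ x : ℝ, HasDerivAt G (g' x) x := fun x =>
    (hg'cont.integral_hasStrictDerivAt 0 x).hasDerivAt
  set h : ℝ → ℝ := fun x => f x * Real.exp (-G x) with hhdef
  have hh : ∀ x ∈ Set.Ici (0 : ℝ), HasDerivAt h 0 x := by
    intro x hx
    have h1 : HasDerivAt (fun y => Real.exp (-G y)) (-g' x * Real.exp (-G x)) x := by
      exact ((Real.hasDerivAt_exp (-G x)).comp x ((hG x).neg)).congr_deriv (by ring : _ = -g' x * Real.exp (-G x))
    have := (hf x hx).mul h1
    have hgx : g' x = g x := by simp [hg'def, max_eq_left (Set.mem_Ici.mp hx)]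
    exact this.congr_deriv (by rw [hgx]; ring)
  intro t ht
  have hconst : h t = h 0 := by
    have := constant_of_has_deriv_right_zero (f := h) (a := 0) (b := t)
      (fun x hx => ((hh x hx.1).continuousAt.continuousWithinAt))
      (fun x hx => (hh x hx.1).hasDerivWithinAt)
    exact this t ⟨ht, le_refl t⟩
  have h0' : h 0 = f 0 := by simp [hhdef, hGdef]
  have : 0 < h t := by rw [hconst, h0']; exact h0
  have := mul_pos this (Real.exp_pos (G t))
  simpa [hhdef, mul_assoc, ← Real.exp_add] using this

theorem stmt16 (ω : ℝ) (hω : 0 < ω) (z a b : ℝ → ℝ)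
    (hz : ∀ t ∈ Set.Ici (0 : ℝ), HasDerivAt z (- z t * (a t + b t)) t)
    (ha : ∀ t ∈ Set.Ici (0 : ℝ), HasDerivAt a (2 * ω * z t * a t) t)
    (hb : ∀ t ∈ Set.Ici (0 : ℝ), HasDerivAt b (- 2 * ω * z t * b t) t)
    (hz0 : 0 < z 0) (hab0 : a 0 = b 0) (ha0 : 0 < a 0) :
    (∀ t ∈ Set.Ici (0 : ℝ), 0 < z t) ∧
      (∀ t ∈ Set.Ici (0 : ℝ), 0 ≤ a t - b t) ∧
      MonotoneOn (fun t => a t + b t) (Set.Ici (0 : ℝ)) := by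
  have hzc : ContinuousOn z (Set.Ici 0) :=
    fun t ht => (hz t ht).continuousAt.continuousWithinAt
  have hac : ContinuousOn a (Set.Ici 0) :=
    fun t ht => (ha t ht).continuousAt.continuousWithinAt
  have hbc : ContinuousOn b (Set.Ici 0) :=
    fun t ht => (hb t ht).continuousAt.continuousWithinAt
  -- positivity of z
  have hzpos : ∀ t ∈ Set.Ici (0 : ℝ), 0 < z t := by
    apply pos_of_linear_ode z (fun t => -(a t + b t)) ((hac.add hbc).neg) _ hz0
    intro t ht
    have := hz t ht
    convert this using 1; ring
  -- positivity of a
  have hapos : ∀ t ∈ Set.Ici (0 : ℝ), 0 < a t := by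
    apply pos_of_linear_ode a (fun t => 2 * ω * z t)
      ((continuousOn_const.mul hzc)) _ ha0
    intro t ht; exact ha t ht
  -- positivity of b
  have hbpos : ∀ t ∈ Set.Ici (0 : ℝ), 0 < b t := by
    apply pos_of_linear_ode b (fun t => -2 * ω * z t)
      ((continuousOn_const.mul hzc)) _ (hab0 ▸ ha0)
    intro t ht; exact hb t ht
  -- a - b is monotone on Ici 0
  have hd : ∀ t ∈ Set.Ici (0 : ℝ),
      HasDerivAt (fun t => a t - b t) (2 * ω * z t * (a t + b t)) t := by
    intro t ht
    have := (ha t ht).sub (hb t ht)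
    exact this.congr_deriv (by ring)
  have hdc : ContinuousOn (fun t => a t - b t) (Set.Ici 0) := hac.sub hbc
  have hdmono : MonotoneOn (fun t => a t - b t) (Set.Ici 0) := by
    apply monotoneOn_of_deriv_nonneg (convex_Ici 0) hdc
    · intro x hx
      rw [interior_Ici] at hx
      exact ((hd x (Set.mem_Ici.mpr (le_of_lt hx))).differentiableAt).differentiableWithinAt
    · intro x hx
      rw [interior_Ici] at hx
      rw [(hd x (Set.mem_Ici.mpr (le_of_lt hx))).deriv]
      have hx' : x ∈ Set.Ici (0:ℝ) := Set.mem_Ici.mpr (le_of_lt hx)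
      have := mul_pos (hzpos x hx') (add_pos (hapos x hx') (hbpos x hx'))
      nlinarith [mul_pos hω this]
  have hdnonneg : ∀ t ∈ Set.Ici (0 : ℝ), 0 ≤ a t - b t := by
    intro t ht
    have h2 : a 0 - b 0 ≤ a t - b t := hdmono (Set.self_mem_Ici) ht ht
    have h0 : a 0 - b 0 = 0 := by rw [hab0]; ring
    linarith
  refine ⟨hzpos, hdnonneg, ?_⟩
  apply monotoneOn_of_deriv_nonneg (convex_Ici 0) (hac.add hbc)
  · intro x hx
    rw [interior_Ici] at hx
    exact (((ha x (Set.mem_Ici.mpr (le_of_lt hx))).add (hb x (Set.mem_Ici.mpr (le_of_lt hx)))).differentiableAt).differentiableWithinAt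
  · intro x hx
    rw [interior_Ici] at hx
    have hx' : x ∈ Set.Ici (0:ℝ) := Set.mem_Ici.mpr (le_of_lt hx)
    rw [((ha x hx').add (hb x hx')).deriv]
    have h1 : 2 * ω * z x * a x + -2 * ω * z x * b x = 2 * ω * z x * (a x - b x) := by ring
    rw [h1]
    have h2 := hdnonneg x hx'
    have hz' := (hzpos x hx').le
    nlinarith [mul_nonneg (mul_nonneg (le_of_lt hω) hz') h2]
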